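/- Let G be a group, H ⊴ G normal with quotient Q = G/H, s : Q → G a section with s(ē) = e, and m(p,q) = s(pq)⁻¹s(p)s(q) ∈ H. Let A be an abelian group with a G-action α (factoring appropriately), and let (λ, μ) be a characteristic cocycle for (G, H, A). Define δ_{λ,μ}(p,q,r) := α_{s(pq)}(λ(s(r), m(p,q)))⁻¹ · α_{s(pqr)}( μ(m(pq,r), s(r)⁻¹ m(p,q) s(r)) · μ(m(p,qr), m(q,r))⁻¹ ). Then if (λ, μ) is a coboundary, i.e. λ(g,n) = α_g(z_{g⁻¹ng})z_n⁻¹ and μ(m,n) = z_m z_n z_{mn}⁻¹ for some z : H → A with z_e = 1 (with α trivial on A restricted to H), the function δ_{λ,μ} : Q³ → A is a 3-coboundary of Q; in particular δ : (λ,μ) ↦ δ_{λ,μ} descends to a well-defined homomorphism from the quotient group Λ = Z/B of characteristic invariants to H³ of Q (with the induced Q-action on A). -/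
import Mathlib


/-- `m(p,q) = s(pq)⁻¹ s(p) s(q)`. -/
def hjrM {G : Type*} [Group G] (H : Subgroup G) [H.Normal]
    (s : G ⧸ H → G) (p q : G ⧸ H) : G :=
  (s (p * q))⁻¹ * s p * s q

/-- The generalized Huebschmann–Jones–Ratcliffe map `δ_{λ,μ}`. -/
def hjrDelta {G A : Type*} [Group G] [CommGroup A]
    (α : G →* MulAut A) (H : Subgroup G) [H.Normal]
    (s : G ⧸ H → G) (lam mu : G → G → A) (p q r : G ⧸ H) : A :=
  (α (s (p * q)) (lam (s r) (hjrM H s p q)))⁻¹ *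
    α (s (p * q * r))
      (mu (hjrM H s (p * q) r) ((s r)⁻¹ * hjrM H s p q * s r) *
        (mu (hjrM H s p (q * r)) (hjrM H s q r))⁻¹)

/-- If `(λ,μ)` is a coboundary (built from `z : H → A`, with the `H`-action
on `A` trivial), then `δ_{λ,μ}` is a 3-coboundary of `Q = G/H` (w.r.t. the induced
`Q`-action `p ↦ α_{s(p)}`); moreover `δ` is multiplicative in `(λ,μ)`, hence descends to
a homomorphism on the quotient group of characteristic invariants. -/
theorem stmt16 {G A : Type*} [Group G] [CommGroup A]
    (α : G →* MulAut A) (H : Subgroup G) [H.Normal]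
    (s : G ⧸ H → G)
    (hs : ∀ p : G ⧸ H, (QuotientGroup.mk (s p) : G ⧸ H) = p)
    (hse : s 1 = 1)
    (htriv : ∀ m ∈ H, ∀ a : A, α m a = a)
    (z : G → A) (hz1 : z 1 = 1)
    (lam : G → G → A)
    (hlam : ∀ g n : G, lam g n = α g (z (g⁻¹ * n * g)) * (z n)⁻¹)
    (mu : G → G → A)
    (hmu : ∀ m n : G, mu m n = z m * z n * (z (m * n))⁻¹) :
    (∃ η : G ⧸ H → G ⧸ H → A, ∀ p q r : G ⧸ H,
      hjrDelta α H s lam mu p q r =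
        α (s p) (η q r) * η p (q * r) * (η (p * q) r)⁻¹ * (η p q)⁻¹) ∧
    (∀ lam' mu' : G → G → A, ∀ p q r : G ⧸ H,
      hjrDelta α H s (fun g n => lam g n * lam' g n)
          (fun a b => mu a b * mu' a b) p q r =
        hjrDelta α H s lam mu p q r * hjrDelta α H s lam' mu' p q r) := by
  constructor
  · have hMmem : ∀ p q : G ⧸ H, hjrM H s p q ∈ H := by
      intro p q
      have : ((hjrM H s p q : G) : G ⧸ H) = 1 := by
        simp only [hjrM, QuotientGroup.mk_mul, QuotientGroup.mk_inv, hs]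
        group
      exact (QuotientGroup.eq_one_iff _).mp this
    have h1 : ∀ p q : G ⧸ H, s p * s q = s (p * q) * hjrM H s p q := by
      intro p q; simp only [hjrM]; group
    have key : ∀ (p q : G ⧸ H) (a : A), α (s p) (α (s q) a) = α (s (p * q)) a := by
      intro p q a
      have : α (s p) (α (s q) a) = α (s p * s q) a := by rw [map_mul]; rfl
      rw [this, h1 p q, map_mul]
      exact congrArg _ (htriv _ (hMmem p q) _)
    refine ⟨fun p q => (α (s (p*q)) (z (hjrM H s p q)))⁻¹, fun p q r => ?_⟩
    have hprod : hjrM H s (p*q) r * ((s r)⁻¹ * hjrM H s p q * s r)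
        = hjrM H s p (q*r) * hjrM H s q r := by
      simp only [hjrM, ← mul_assoc]; group
    have hz : z (hjrM H s (p*q) r * ((s r)⁻¹ * hjrM H s p q * s r))
        = z (hjrM H s p (q*r) * hjrM H s q r) := by rw [hprod]
    have k1 := key (p*q) r (z ((s r)⁻¹ * hjrM H s p q * s r))
    have k2 := key p (q*r) (z (hjrM H s q r))
    have k3 : s (p * (q*r)) = s (p*q*r) := by rw [← mul_assoc]
    simp only [hjrDelta, hlam, hmu, map_mul, map_inv, mul_inv_rev, inv_inv, hz, k3] at *
    rw [k1, k2]
    rw [← Additive.ofMul.injective.eq_iff]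
    simp only [ofMul_mul, ofMul_inv]
    abel
  · intro lam' mu' p q r
    simp only [hjrDelta, map_mul, map_inv, mul_inv_rev]
    rw [← Additive.ofMul.injective.eq_iff]
    simp only [ofMul_mul, ofMul_inv]
    abel
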